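/- Let G be a finite simple graph on n vertices with no isolated vertices (minimum degree at least 1) and maximum degree at most Δ. Then G has a matching of size at least ⌊n/(2(2Δ−1))⌋. In particular, a graph on at least 2(k+1)(2k+1) vertices with minimum degree at least 1 and maximum degree at most k+1 has a matching of size at least k+1. -/

import Mathlib

/-- A matching given as a finite set of edges of `G`: a set of edges of `G`,
no two distinct edges of which share an endpoint. -/
def IsMatchingEdgeSet {V : Type*} [Fintype V] [DecidableEq V] (G : SimpleGraph V)
    [DecidableRel G.Adj] (M : Finset (Sym2 V)) : Prop :=
  M ⊆ G.edgeFinset ∧ ∀ e ∈ M, ∀ f ∈ M, e ≠ f → ∀ v : V, v ∈ e → v ∉ f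

lemma main_matching {V : Type} [Fintype V] [DecidableEq V] (G : SimpleGraph V)
    [DecidableRel G.Adj] (Δ : ℕ) (hmin : ∀ v : V, 1 ≤ G.degree v)
    (hmax : G.maxDegree ≤ Δ) :
    ∃ M : Finset (Sym2 V), IsMatchingEdgeSet G M ∧
      Fintype.card V / (2 * (2 * Δ - 1)) ≤ M.card := by
  classical
  rcases Nat.eq_zero_or_pos Δ with hΔ | hΔ
  · refine ⟨∅, ⟨Finset.empty_subset _, by simp⟩, by simp [hΔ]⟩
  -- take a maximum-cardinality matching
  have hne : (G.edgeFinset.powerset.filter (fun M => IsMatchingEdgeSet G M)).Nonempty :=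
    ⟨∅, Finset.mem_filter.2 ⟨Finset.empty_mem_powerset _, Finset.empty_subset _, by simp⟩⟩
  obtain ⟨M, hM, hMmax⟩ := Finset.exists_max_image _ Finset.card hne
  simp only [Finset.mem_filter, Finset.mem_powerset] at hM
  obtain ⟨hMsub, hMm⟩ := hM
  refine ⟨M, hMm, ?_⟩
  set C : Finset V := Finset.univ.filter (fun v => ∃ e ∈ M, v ∈ e) with hCdef
  have hmemC : ∀ v : V, v ∈ C ↔ ∃ e ∈ M, v ∈ e := by
    intro v; simp [hCdef]
  -- every vertex in C has a neighbor in C (its matched partner)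
  have hpartner : ∀ v ∈ C, ∃ w, G.Adj v w ∧ w ∈ C := by
    intro v hv
    obtain ⟨e, heM, hve⟩ := (hmemC v).1 hv
    obtain ⟨w, rfl⟩ := Sym2.mem_iff_exists.1 hve
    have hadj : G.Adj v w := by
      have := hMm.1 heM
      rwa [SimpleGraph.mem_edgeFinset, SimpleGraph.mem_edgeSet] at this
    exact ⟨w, hadj, (hmemC w).2 ⟨s(v, w), heM, Sym2.mem_mk_right v w⟩⟩
  -- every neighbor of an uncovered vertex is covered
  have hcover : ∀ u, u ∉ C → ∀ w, G.Adj u w → w ∈ C := by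
    intro u hu w hadj
    by_contra hw
    have hnewM : IsMatchingEdgeSet G (insert s(u, w) M) := by
      constructor
      · intro e he
        rcases Finset.mem_insert.1 he with rfl | he
        · rwa [SimpleGraph.mem_edgeFinset, SimpleGraph.mem_edgeSet]
        · exact hMsub he
      · intro e he f hf hef v hve
        rcases Finset.mem_insert.1 he with he' | he'
        · subst he'
          rcases Finset.mem_insert.1 hf with hf' | hf'
          · exact absurd hf'.symm hef
          · rcases Sym2.mem_iff.1 hve with rfl | rfl
            · intro hvf; exact hu ((hmemC v).2 ⟨f, hf', hvf⟩)
            · intro hvf; exact hw ((hmemC v).2 ⟨f, hf', hvf⟩)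
        · rcases Finset.mem_insert.1 hf with hf' | hf'
          · subst hf'
            intro hvf
            rcases Sym2.mem_iff.1 hvf with rfl | rfl
            · exact hu ((hmemC v).2 ⟨e, he', hve⟩)
            · exact hw ((hmemC v).2 ⟨e, he', hve⟩)
          · exact hMm.2 e he' f hf' hef v hve
    have hnotmem : s(u, w) ∉ M := by
      intro h
      exact hu ((hmemC u).2 ⟨s(u, w), h, Sym2.mem_mk_left u w⟩)
    have hle : (insert s(u, w) M).card ≤ M.card := by
      refine hMmax _ ?_
      simp only [Finset.mem_filter, Finset.mem_powerset]
      exact ⟨hnewM.1, hnewM⟩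
    rw [Finset.card_insert_of_notMem hnotmem] at hle
    omega
  -- |C| = 2 * |M|
  have hCeq : C = M.biUnion (fun e => Finset.univ.filter (fun v => v ∈ e)) := by
    ext v
    simp [hCdef]
  have hCcard : C.card = 2 * M.card := by
    rw [hCeq, Finset.card_biUnion]
    · rw [Finset.sum_congr rfl (fun e he => ?_), Finset.sum_const, smul_eq_mul, mul_comm]
      · have hedge := hMsub he
        induction e with
        | _ a b =>
          have hadj : G.Adj a b := by
            rwa [SimpleGraph.mem_edgeFinset, SimpleGraph.mem_edgeSet] at hedge
          have : (Finset.univ.filter (fun v => v ∈ s(a, b))) = {a, b} := by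
            ext v; simp [Sym2.mem_iff]
          rw [this, Finset.card_insert_of_notMem (by simp [hadj.ne]), Finset.card_singleton]
    · intro e he f hf hef
      simp only [Finset.disjoint_left, Finset.mem_filter]
      rintro v ⟨-, hve⟩ ⟨-, hvf⟩
      exact hMm.2 e he f hf hef v hve hvf
  -- bound uncovered vertices
  set U : Finset V := Finset.univ \ C with hUdef
  have hUsub : U ⊆ C.biUnion (fun w => G.neighborFinset w ∩ U) := by
    intro u hu
    have huC : u ∉ C := by simp [hUdef] at hu; exact hu
    have : (G.neighborFinset u).Nonempty := by
      rw [← Finset.card_pos, G.card_neighborFinset_eq_degree]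
      exact hmin u
    obtain ⟨w, hw⟩ := this
    rw [SimpleGraph.mem_neighborFinset] at hw
    have hwC : w ∈ C := hcover u huC w hw
    refine Finset.mem_biUnion.2 ⟨w, hwC, Finset.mem_inter.2 ⟨?_, hu⟩⟩
    rw [SimpleGraph.mem_neighborFinset]
    exact hw.symm
  have hterm : ∀ w ∈ C, (G.neighborFinset w ∩ U).card ≤ Δ - 1 := by
    intro w hw
    obtain ⟨p, hadj, hpC⟩ := hpartner w hw
    have hsub : G.neighborFinset w ∩ U ⊆ G.neighborFinset w \ {p} := by
      intro x hx
      rw [Finset.mem_inter] at hx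
      refine Finset.mem_sdiff.2 ⟨hx.1, ?_⟩
      simp only [Finset.mem_singleton]
      rintro rfl
      have := hx.2
      rw [hUdef, Finset.mem_sdiff] at this
      exact this.2 hpC
    calc (G.neighborFinset w ∩ U).card ≤ (G.neighborFinset w \ {p}).card :=
          Finset.card_le_card hsub
      _ ≤ (G.neighborFinset w).card - 1 := by
          rw [Finset.card_sdiff_of_subset (by simpa [SimpleGraph.mem_neighborFinset] using hadj)]
          simp
      _ ≤ Δ - 1 := by
          have h1 : G.degree w ≤ Δ := le_trans (G.degree_le_maxDegree w) hmax
          rw [G.card_neighborFinset_eq_degree]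
          omega
  have hUcard : U.card ≤ C.card * (Δ - 1) := by
    calc U.card ≤ (C.biUnion (fun w => G.neighborFinset w ∩ U)).card :=
          Finset.card_le_card hUsub
      _ ≤ ∑ w ∈ C, (G.neighborFinset w ∩ U).card := Finset.card_biUnion_le
      _ ≤ ∑ _w ∈ C, (Δ - 1) := Finset.sum_le_sum hterm
      _ = C.card * (Δ - 1) := by rw [Finset.sum_const, smul_eq_mul]
  have hcardV : Fintype.card V = C.card + U.card := by
    rw [hUdef, Finset.card_sdiff_of_subset (Finset.subset_univ C), Finset.card_univ]
    have := Finset.card_le_univ C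
    omega
  have hfin : Fintype.card V ≤ 2 * (2 * Δ - 1) * M.card := by
    have : Fintype.card V ≤ 2 * M.card * Δ := by
      rw [hcardV, hCcard]
      have := hUcard
      rw [hCcard] at this
      nlinarith [Nat.sub_add_cancel hΔ]
    nlinarith [Nat.sub_add_cancel (show 1 ≤ 2 * Δ by omega), Nat.sub_add_cancel hΔ]
  calc Fintype.card V / (2 * (2 * Δ - 1)) ≤ 2 * (2 * Δ - 1) * M.card / (2 * (2 * Δ - 1)) :=
        Nat.div_le_div_right hfin
    _ = M.card := Nat.mul_div_cancel_left _ (by omega)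

/-- A finite simple graph on `n` vertices with no isolated vertices and maximum degree
at most `Δ` has a matching of size at least `⌊n / (2(2Δ - 1))⌋`. In particular, a graph
on at least `2(k+1)(2k+1)` vertices with minimum degree at least `1` and maximum degree
at most `k + 1` has a matching of size at least `k + 1`. -/
theorem matching_of_minDegree_one_maxDegree :
    (∀ (V : Type) [Fintype V] [DecidableEq V] (G : SimpleGraph V) [DecidableRel G.Adj]
        (Δ : ℕ), (∀ v : V, 1 ≤ G.degree v) → G.maxDegree ≤ Δ →
        ∃ M : Finset (Sym2 V), IsMatchingEdgeSet G M ∧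
          Fintype.card V / (2 * (2 * Δ - 1)) ≤ M.card) ∧
    (∀ (V : Type) [Fintype V] [DecidableEq V] (G : SimpleGraph V) [DecidableRel G.Adj]
        (k : ℕ), 2 * (k + 1) * (2 * k + 1) ≤ Fintype.card V →
        (∀ v : V, 1 ≤ G.degree v) → G.maxDegree ≤ k + 1 →
        ∃ M : Finset (Sym2 V), IsMatchingEdgeSet G M ∧ k + 1 ≤ M.card) := by
  constructor
  · intro V _ _ G _ Δ hmin hmax
    exact main_matching G Δ hmin hmax
  · intro V _ _ G _ k hcard hmin hmax
    obtain ⟨M, hM, hMcard⟩ := main_matching G (k + 1) hmin hmax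
    refine ⟨M, hM, le_trans ?_ hMcard⟩
    rw [Nat.le_div_iff_mul_le (by omega)]
    have h21 : 2 * (k + 1) - 1 = 2 * k + 1 := by omega
    calc (k + 1) * (2 * (2 * (k + 1) - 1)) = 2 * (k + 1) * (2 * k + 1) := by rw [h21]; ring
      _ ≤ Fintype.card V := hcard
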